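/- arXiv:1505.07331 — 3 statements merged into one kernel-verified Lean document; each statement's English description precedes it below -/
import Mathlib

section
/- Converse for homothetic motions: if z(t) = r(t)·x is a solution of the n-body problem for some positive real function r(t) (nonconstant in an appropriate sense, with x ≠ 0 collision-free), then there is a constant λ with r² r̈ = −λ and x is a central configuration with constant λ. -/
open Finset

/-- The `k`-th component of the gradient `∇U` of the force function. -/
noncomputable def nbodyGradU {n : ℕ} {E : Type*} [NormedAddCommGroup E]
    [InnerProductSpace ℝ E] (m : Fin n → ℝ) (x : Fin n → E) (k : Fin n) : E :=
  ∑ j ∈ univ.erase k, ((m j * m k) / ‖x j - x k‖ ^ 3) • (x j - x k)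

lemma nbodyGradU_scale {n : ℕ} {E : Type*} [NormedAddCommGroup E]
    [InnerProductSpace ℝ E] (m : Fin n → ℝ) (x : Fin n → E)
    (hcol : ∀ j k : Fin n, j ≠ k → x j ≠ x k)
    (c : ℝ) (hc : 0 < c) (k : Fin n) :
    nbodyGradU m (fun i => c • x i) k = (c ^ 2)⁻¹ • nbodyGradU m x k := by
  unfold nbodyGradU
  rw [Finset.smul_sum]
  refine Finset.sum_congr rfl fun j hj => ?_
  have hjk : j ≠ k := (Finset.mem_erase.mp hj).1
  have hv : x j - x k ≠ 0 := sub_ne_zero.mpr (hcol j k hjk)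
  have hnv : ‖x j - x k‖ ≠ 0 := norm_ne_zero_iff.mpr hv
  have h1 : c • x j - c • x k = c • (x j - x k) := (smul_sub c _ _).symm
  rw [h1, norm_smul, Real.norm_eq_abs, abs_of_pos hc, smul_smul, smul_smul]
  congr 1
  field_simp

/-- Converse for homothetic motions: if `z(t) = r(t) x` solves Newton's equations
for a positive function `r` and a nonzero collision-free configuration `x`, then
`r² r̈ = -λ` for some constant `λ` and `x` is central with constant `λ`. -/
theorem homothetic_motion_converse {n : ℕ} {E : Type*} [NormedAddCommGroup E]
    [InnerProductSpace ℝ E] [FiniteDimensional ℝ E]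
    (m : Fin n → ℝ) (hm : ∀ k, 0 < m k)
    (x : Fin n → E) (hx : x ≠ 0)
    (hcol : ∀ j k : Fin n, j ≠ k → x j ≠ x k)
    (r : ℝ → ℝ) (hr : ∀ t, 0 < r t)
    (hr1 : Differentiable ℝ r) (hr2 : Differentiable ℝ (deriv r))
    (hnewton : ∀ t k, m k • deriv (deriv fun s => r s • x k) t
      = nbodyGradU m (fun i => r t • x i) k) :
    ∃ lam : ℝ, (∀ t, (r t) ^ 2 * deriv (deriv r) t = -lam) ∧
      ∀ k, nbodyGradU m x k = -(lam * m k) • x k := by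
  -- second derivative of r s • v
  have hd1 : ∀ (v : E), (deriv fun s => r s • v) = fun s => deriv r s • v := by
    intro v
    funext s
    exact deriv_smul_const (hr1 s) v
  have hd2 : ∀ (v : E) (t : ℝ), deriv (deriv fun s => r s • v) t
      = deriv (deriv r) t • v := by
    intro v t
    rw [hd1 v]
    exact deriv_smul_const (hr2 t) v
  -- main identity
  have key : ∀ t k, nbodyGradU m x k
      = (r t ^ 2 * deriv (deriv r) t * m k) • x k := by
    intro t k
    have h := hnewton t k
    rw [hd2, nbodyGradU_scale m x hcol (r t) (hr t)] at h
    have hrt : (r t) ^ 2 ≠ 0 := pow_ne_zero 2 (ne_of_gt (hr t))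
    have := congrArg (fun v => (r t ^ 2) • v) h
    simp only [smul_smul, mul_inv_cancel₀ hrt, one_smul] at this
    rw [← this]; congr 1; ring
  -- pick k₀ with x k₀ ≠ 0
  obtain ⟨k₀, hk₀⟩ := Function.ne_iff.mp hx
  have hk₀' : x k₀ ≠ 0 := hk₀
  set lam : ℝ := -(r 0 ^ 2 * deriv (deriv r) 0) with hlam
  refine ⟨lam, ?_, ?_⟩
  · intro t
    have h1 := key t k₀
    have h2 := key 0 k₀
    have h3 : (r t ^ 2 * deriv (deriv r) t * m k₀) • x k₀
        = (r 0 ^ 2 * deriv (deriv r) 0 * m k₀) • x k₀ := by rw [← h1, ← h2]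
    have h4 := smul_left_injective ℝ hk₀' h3
    have hmk : m k₀ ≠ 0 := ne_of_gt (hm k₀)
    have h5 : r t ^ 2 * deriv (deriv r) t = r 0 ^ 2 * deriv (deriv r) 0 :=
      mul_right_cancel₀ hmk h4
    rw [h5, hlam]; ring
  · intro k
    rw [key 0 k, hlam]
    congr 1
    ring
end

section
/- Converse for rigid motions: let x ∈ Eⁿ be a central configuration with constant λ > 0 whose components span E, and let Z : E → E be skew-symmetric. Then z(t) = exp(tZ)x solves Newton's equations if and only if Z² = −λ · id, i.e. Z = √λ · J for a compatible complex structure J on E. -/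
open Finset

open NormedSpace

section Aux

variable {E : Type*} [NormedAddCommGroup E] [InnerProductSpace ℝ E] [CompleteSpace E]

lemma expZ_hasDerivAt (Z : E →L[ℝ] E) (u : E) (t : ℝ) :
    HasDerivAt (fun s : ℝ => exp (s • Z) u) (exp (t • Z) (Z u)) t := by
  have h := (hasDerivAt_exp_smul_const (𝕂 := ℝ) Z t).clm_apply (hasDerivAt_const t u)
  simpa using h

lemma expZ_comm (Z : E →L[ℝ] E) (t : ℝ) (u : E) :
    exp (t • Z) (Z u) = Z (exp (t • Z) u) := by
  have h1 := hasDerivAt_exp_smul_const (𝕂 := ℝ) Z t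
  have h2 := hasDerivAt_exp_smul_const' (𝕂 := ℝ) Z t
  have h := h1.unique h2
  calc exp (t • Z) (Z u) = (exp (t • Z) * Z) u := rfl
    _ = (Z * exp (t • Z)) u := by rw [h]
    _ = Z (exp (t • Z) u) := rfl

lemma expZ_inner (Z : E →L[ℝ] E)
    (hskew : ∀ u v : E, (inner ℝ (Z u) v : ℝ) = -(inner ℝ u (Z v) : ℝ)) (t : ℝ) (u v : E) :
    (inner ℝ (exp (t • Z) u) (exp (t • Z) v) : ℝ) = inner ℝ u v := by
  set g : ℝ → ℝ := fun s => (inner ℝ (exp (s • Z) u) (exp (s • Z) v) : ℝ) with hg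
  have hd : ∀ s : ℝ, HasDerivAt g 0 s := by
    intro s
    have h := (expZ_hasDerivAt Z u s).inner ℝ (expZ_hasDerivAt Z v s)
    refine h.congr_deriv ?_
    rw [expZ_comm, expZ_comm]
    linarith [hskew (exp (s • Z) u) (exp (s • Z) v)]
  have hconst : g t = g 0 :=
    is_const_of_deriv_eq_zero (fun s => (hd s).differentiableAt)
      (fun s => (hd s).deriv) t 0
  simpa [hg, exp_zero] using hconst

lemma expZ_norm (Z : E →L[ℝ] E)
    (hskew : ∀ u v : E, (inner ℝ (Z u) v : ℝ) = -(inner ℝ u (Z v) : ℝ)) (t : ℝ) (u : E) :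
    ‖exp (t • Z) u‖ = ‖u‖ := by
  have h := expZ_inner Z hskew t u u
  rw [real_inner_self_eq_norm_sq, real_inner_self_eq_norm_sq] at h
  exact (sq_eq_sq₀ (norm_nonneg _) (norm_nonneg _)).mp h

lemma grad_equivariant {n : ℕ} (m : Fin n → ℝ) (x : Fin n → E) (Z : E →L[ℝ] E)
    (hskew : ∀ u v : E, (inner ℝ (Z u) v : ℝ) = -(inner ℝ u (Z v) : ℝ)) (t : ℝ) (k : Fin n) :
    nbodyGradU m (fun i => exp (t • Z) (x i)) k = exp (t • Z) (nbodyGradU m x k) := by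
  unfold nbodyGradU
  rw [map_sum]
  refine Finset.sum_congr rfl fun j _ => ?_
  have hn : ‖exp (t • Z) (x j) - exp (t • Z) (x k)‖ = ‖x j - x k‖ := by
    rw [← map_sub]; exact expZ_norm Z hskew t _
  rw [hn, map_smul, map_sub]

end Aux

/-- Converse for rigid motions: for a central configuration `x` spanning `E` with
constant `λ > 0` and a skew-symmetric `Z`, the curve `z(t) = exp(tZ) x` solves
Newton's equations iff `Z² = -λ·id`, i.e. `Z = √λ J` for a compatible complex
structure `J` on `E`. -/
theorem rigid_motion_converse {n : ℕ} {E : Type*} [NormedAddCommGroup E]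
    [InnerProductSpace ℝ E] [FiniteDimensional ℝ E]
    (m : Fin n → ℝ) (hm : ∀ k, 0 < m k)
    (x : Fin n → E) (hcol : ∀ j k : Fin n, j ≠ k → x j ≠ x k)
    (hspan : Submodule.span ℝ (Set.range x) = ⊤)
    (lam : ℝ) (hlam : 0 < lam)
    (hcentral : ∀ k, nbodyGradU m x k = -(lam * m k) • x k)
    (Z : E →L[ℝ] E)
    (hskew : ∀ u v : E, (inner ℝ (Z u) v : ℝ) = -(inner ℝ u (Z v) : ℝ)) :
    (∀ t k, m k • deriv (deriv fun s : ℝ => (NormedSpace.exp (s • Z)) (x k)) t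
        = nbodyGradU m (fun i => (NormedSpace.exp (t • Z)) (x i)) k)
    ↔ (Z.comp Z = -(lam • (1 : E →L[ℝ] E)) ∧
        ∃ J : E →L[ℝ] E, (∀ u v : E, (inner ℝ (J u) v : ℝ) = -(inner ℝ u (J v) : ℝ)) ∧
          J.comp J = -1 ∧ Z = Real.sqrt lam • J) := by
  have key : ∀ (u : E) (t : ℝ), deriv (deriv fun s : ℝ => exp (s • Z) u) t
      = exp (t • Z) (Z (Z u)) := by
    intro u t
    have h1 : (deriv fun s : ℝ => exp (s • Z) u) = fun s => exp (s • Z) (Z u) :=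
      funext fun s => (expZ_hasDerivAt Z u s).deriv
    rw [h1, (expZ_hasDerivAt Z (Z u) t).deriv]
  have hs : Real.sqrt lam ≠ 0 := (Real.sqrt_pos.mpr hlam).ne'
  constructor
  · intro H
    have hx : ∀ k, Z (Z (x k)) = -(lam • x k) := by
      intro k
      have h0 := H 0 k
      rw [key] at h0
      simp only [zero_smul, exp_zero, ContinuousLinearMap.one_apply] at h0
      rw [show (fun i => x i) = x from rfl, hcentral k] at h0
      have h1 : m k • Z (Z (x k)) = m k • (-(lam • x k)) := by
        rw [h0]; module
      have h2 := smul_right_injective E (ne_of_gt (hm k)) h1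
      simpa using h2
    have hZZ : Z.comp Z = -(lam • (1 : E →L[ℝ] E)) := by
      apply ContinuousLinearMap.coe_injective
      apply LinearMap.ext_on hspan
      rintro _ ⟨k, rfl⟩
      simpa using hx k
    refine ⟨hZZ, (Real.sqrt lam)⁻¹ • Z, ?_, ?_, ?_⟩
    · intro u v
      simp only [ContinuousLinearMap.smul_apply]
      rw [real_inner_smul_left, real_inner_smul_right, hskew]; ring
    · rw [ContinuousLinearMap.smul_comp, ContinuousLinearMap.comp_smul, hZZ]
      rw [smul_neg, smul_neg, smul_smul, smul_smul]
      have hc : (Real.sqrt lam)⁻¹ * (Real.sqrt lam)⁻¹ * lam = 1 := by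
        rw [← Real.mul_self_sqrt hlam.le]; field_simp; rw [Real.sqrt_sq (Real.sqrt_nonneg _)]
      rw [hc, one_smul]
    · rw [smul_smul, mul_inv_cancel₀ hs, one_smul]
  · rintro ⟨hZZ, -⟩ t k
    have hx : Z (Z (x k)) = -(lam • x k) := by
      have h := congrArg (fun f : E →L[ℝ] E => f (x k)) hZZ
      simpa using h
    rw [key, hx, grad_equivariant m x Z hskew t k, hcentral k]
    rw [map_neg, map_smul, map_smul]
    module
end

section
/- Homographic motions: if x ∈ Eⁿ is a central configuration with constant λ, J a compatible complex structure on E, and (r(t), θ(t)) solves the planar Kepler equations r̈ − rθ̇² = −λ/r² and rθ̈ + 2ṙθ̇ = 0 with r > 0, then z(t) = r(t) exp(θ(t)J) x solves Newton's equations z̈ m = ∇U(z). -/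
open Finset

section Aux

variable {E : Type*} [NormedAddCommGroup E] [InnerProductSpace ℝ E] [CompleteSpace E]

lemma aux_e (J : E →L[ℝ] E) {θ : ℝ → ℝ} {θ's : ℝ} {s : ℝ} (hθ : HasDerivAt θ θ's s) (u : E) :
    HasDerivAt (fun a : ℝ => (NormedSpace.exp (θ a • J)) u)
      (θ's • J ((NormedSpace.exp (θ s • J)) u)) s := by
  have h1 : HasDerivAt (fun a : ℝ => NormedSpace.exp (a • J))
      (J * NormedSpace.exp (θ s • J)) (θ s) := hasDerivAt_exp_smul_const' J (θ s)
  have h2 : HasDerivAt (fun a : ℝ => NormedSpace.exp (θ a • J))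
      (θ's • (J * NormedSpace.exp (θ s • J))) s := h1.scomp s hθ
  have h3 := ((ContinuousLinearMap.apply ℝ E u).hasFDerivAt.comp_hasDerivAt s h2)
  simp [ContinuousLinearMap.mul_apply] at h3
  exact h3

lemma exp_inner (J : E →L[ℝ] E)
    (hskew : ∀ u v : E, (inner ℝ (J u) v : ℝ) = -(inner ℝ u (J v) : ℝ))
    (a : ℝ) (u v : E) :
    (inner ℝ ((NormedSpace.exp (a • J)) u) ((NormedSpace.exp (a • J)) v) : ℝ)
      = inner ℝ u v := by
  set g : ℝ → ℝ := fun b =>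
    (inner ℝ ((NormedSpace.exp (b • J)) u) ((NormedSpace.exp (b • J)) v) : ℝ) with hg
  have hd : ∀ b, HasDerivAt g 0 b := by
    intro b
    have h1 := aux_e J (hasDerivAt_id b) u
    have h2 := aux_e J (hasDerivAt_id b) v
    simp only [one_smul] at h1 h2
    have h3 := (h1.inner ℝ h2)
    have : (inner ℝ ((NormedSpace.exp (b • J)) u) (J ((NormedSpace.exp (b • J)) v)) : ℝ)
        + inner ℝ (J ((NormedSpace.exp (b • J)) u)) ((NormedSpace.exp (b • J)) v) = 0 := by
      rw [hskew]; ring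
    simpa [this] using h3
  have hconst : g a = g 0 :=
    is_const_of_deriv_eq_zero (fun b => (hd b).differentiableAt) (fun b => (hd b).deriv) a 0
  simpa [g, NormedSpace.exp_zero] using hconst

lemma exp_norm (J : E →L[ℝ] E)
    (hskew : ∀ u v : E, (inner ℝ (J u) v : ℝ) = -(inner ℝ u (J v) : ℝ))
    (a : ℝ) (u : E) : ‖(NormedSpace.exp (a • J)) u‖ = ‖u‖ := by
  have h := exp_inner J hskew a u u
  rw [real_inner_self_eq_norm_sq, real_inner_self_eq_norm_sq] at h
  nlinarith [norm_nonneg ((NormedSpace.exp (a • J)) u), norm_nonneg u]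

omit [CompleteSpace E] in
lemma grad_equiv' {n : ℕ} (m : Fin n → ℝ) (x : Fin n → E) (k : Fin n)
    (c : ℝ) (hc : 0 < c) (T : E →L[ℝ] E) (hT : ∀ u, ‖T u‖ = ‖u‖) :
    nbodyGradU m (fun i => c • T (x i)) k = (c ^ 2)⁻¹ • T (nbodyGradU m x k) := by
  unfold nbodyGradU
  rw [map_sum, Finset.smul_sum]
  refine Finset.sum_congr rfl fun j _ => ?_
  have hd : c • T (x j) - c • T (x k) = c • T (x j - x k) := by
    rw [map_sub, smul_sub]
  rw [hd, norm_smul, hT, Real.norm_eq_abs, abs_of_pos hc, map_smul, smul_smul, smul_smul]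
  congr 1
  rcases eq_or_ne ‖x j - x k‖ 0 with h0 | h0
  · simp [h0, mul_pow, hc.ne']
  · rw [mul_pow]
    field_simp

end Aux

/-- Homographic motions: if `x` is central with constant `λ`, `J` a compatible complex
structure, and `(r, θ)` solves the planar Kepler equations in polar coordinates, then
`z(t) = r(t) exp(θ(t) J) x` solves Newton's equations. -/
theorem homographic_motion {n : ℕ} {E : Type*} [NormedAddCommGroup E]
    [InnerProductSpace ℝ E] [FiniteDimensional ℝ E]
    (m : Fin n → ℝ) (hm : ∀ k, 0 < m k)
    (x : Fin n → E) (hcol : ∀ j k : Fin n, j ≠ k → x j ≠ x k)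
    (lam : ℝ)
    (hcentral : ∀ k, nbodyGradU m x k = -(lam * m k) • x k)
    (J : E →L[ℝ] E)
    (hskew : ∀ u v : E, (inner ℝ (J u) v : ℝ) = -(inner ℝ u (J v) : ℝ))
    (hJ2 : J.comp J = -1)
    (r θ : ℝ → ℝ) (hr : ∀ t, 0 < r t)
    (hr1 : Differentiable ℝ r) (hr2 : Differentiable ℝ (deriv r))
    (hθ1 : Differentiable ℝ θ) (hθ2 : Differentiable ℝ (deriv θ))
    (hkepler_rad : ∀ t, deriv (deriv r) t - r t * (deriv θ t) ^ 2 = -lam / (r t) ^ 2)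
    (hkepler_ang : ∀ t, r t * deriv (deriv θ) t + 2 * deriv r t * deriv θ t = 0) :
    ∀ t k, m k • deriv (deriv fun s : ℝ => r s • (NormedSpace.exp (θ s • J)) (x k)) t
      = nbodyGradU m (fun i => r t • (NormedSpace.exp (θ t • J)) (x i)) k := by
  intro t k
  set e : ℝ → E := fun s => (NormedSpace.exp (θ s • J)) (x k) with he_def
  have hJ2' : ∀ w : E, J (J w) = -w := by
    intro w
    have := ContinuousLinearMap.ext_iff.mp hJ2 w
    simpa using this
  have he : ∀ s, HasDerivAt e (deriv θ s • J (e s)) s :=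
    fun s => aux_e J ((hθ1 s).hasDerivAt) (x k)
  have hf : ∀ s, HasDerivAt (fun s => r s • e s)
      (deriv r s • e s + (r s * deriv θ s) • J (e s)) s := by
    intro s
    have := ((hr1 s).hasDerivAt).smul (he s)
    have hre : r s • (deriv θ s • J (e s)) = (r s * deriv θ s) • J (e s) := smul_smul _ _ _
    rw [hre, add_comm] at this
    exact this
  have hderiv1 : deriv (fun s => r s • e s)
      = fun s => deriv r s • e s + (r s * deriv θ s) • J (e s) :=
    funext fun s => (hf s).deriv
  -- second derivative
  have hJe : HasDerivAt (fun s => J (e s)) (deriv θ t • J (J (e t))) t := by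
    have := J.hasFDerivAt.comp_hasDerivAt t (he t)
    rw [map_smul] at this
    exact this
  have hA : HasDerivAt (fun s => deriv r s • e s)
      (deriv r t • (deriv θ t • J (e t)) + deriv (deriv r) t • e t) t :=
    ((hr2 t).hasDerivAt).smul (he t)
  have hB : HasDerivAt (fun s => (r s * deriv θ s) • J (e s))
      ((r t * deriv θ t) • (deriv θ t • J (J (e t)))
        + (deriv r t * deriv (deriv θ) t + deriv r t * deriv θ t
            + r t * deriv (deriv θ) t - deriv r t * deriv (deriv θ) t) • J (e t)) t := by
    have hmul : HasDerivAt (fun s => r s * deriv θ s)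
        (deriv r t * deriv θ t + r t * deriv (deriv θ) t) t :=
      ((hr1 t).hasDerivAt).mul ((hθ2 t).hasDerivAt)
    have := hmul.smul hJe
    convert this using 2
    congr 1
    ring
  have hsum := hA.add hB
  have hdd : deriv (deriv fun s : ℝ => r s • e s) t
      = deriv r t • (deriv θ t • J (e t)) + deriv (deriv r) t • e t
        + ((r t * deriv θ t) • (deriv θ t • J (J (e t)))
          + (deriv r t * deriv (deriv θ) t + deriv r t * deriv θ t
              + r t * deriv (deriv θ) t - deriv r t * deriv (deriv θ) t) • J (e t)) := by
    rw [hderiv1]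
    exact hsum.deriv
  have hsimp : deriv (deriv fun s : ℝ => r s • e s) t
      = (deriv (deriv r) t - r t * (deriv θ t) ^ 2) • e t
        + (r t * deriv (deriv θ) t + 2 * deriv r t * deriv θ t) • J (e t) := by
    rw [hdd, hJ2' (e t)]
    module
  rw [hsimp, hkepler_rad t, hkepler_ang t, zero_smul, add_zero]
  have hRHS : nbodyGradU m (fun i => r t • (NormedSpace.exp (θ t • J)) (x i)) k
      = ((r t) ^ 2)⁻¹ • (NormedSpace.exp (θ t • J)) (nbodyGradU m x k) :=
    grad_equiv' m x k (r t) (hr t) _ (exp_norm J hskew (θ t))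
  rw [hRHS, hcentral k, map_smul, smul_smul, smul_smul]
  show (m k * (-lam / r t ^ 2)) • e t = _
  have : e t = (NormedSpace.exp (θ t • J)) (x k) := rfl
  rw [this]
  congr 1
  have hr0 : (r t : ℝ) ≠ 0 := (hr t).ne'
  field_simp
end
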